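/- Let M be a minimal DFA and k ∈ ℕ, and let N be any DFA obtained from M by a (possibly empty) sequence of merge steps, where each step merges a surviving state q into a distinct surviving state p such that q and p are k-similar as states of the original DFA M and in-level_M(q) ≤ in-level_M(p). Then for all surviving states p', p of N and every word w with δ_N(p', w) = p, if in-level_M(p) < k then |w| ≤ in-level_M(p) − in-level_M(p'). -/

import Mathlib

/-- The distance `d(L, L')` between two languages: the least `ℓ ∈ ℕ` such that
`L` and `L'` agree on all words of length at least `ℓ` (with `min ∅ = ∞`). -/
noncomputable def langDist {α : Type} (L L' : Set (List α)) : ℕ∞ :=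
  sInf {n : ℕ∞ | ∃ ℓ : ℕ, n = (ℓ : ℕ∞) ∧
    ∀ w : List α, ℓ ≤ w.length → (w ∈ L ↔ w ∈ L')}

/-- A deterministic finite automaton with a partial transition function. -/
structure PDFA (α σ : Type) where
  step : σ → α → Option σ
  start : σ
  accept : Set σ

namespace PDFA

variable {α σ : Type}

/-- Running the partial DFA from state `q` on the word `w`. -/
def evalFrom (M : PDFA α σ) (q : σ) (w : List α) : Option σ :=
  w.foldl (fun o a => o.bind fun r => M.step r a) (some q)

/-- Running the partial DFA from the start state. -/
def eval (M : PDFA α σ) (w : List α) : Option σ :=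
  M.evalFrom M.start w

/-- The right-language `L_M(q)` of the state `q`. -/
def rightLang (M : PDFA α σ) (q : σ) : Set (List α) :=
  {w | ∃ p ∈ M.accept, M.evalFrom q w = some p}

/-- The language recognised by the partial DFA. -/
def accepts (M : PDFA α σ) : Set (List α) :=
  {w | ∃ p ∈ M.accept, M.eval w = some p}

/-- The left-language `δ⁻¹(q)` of the state `q`: all words leading to `q`. -/
def leftLang (M : PDFA α σ) (q : σ) : Set (List α) :=
  {w | M.eval w = some q}

/-- `in-level_M(q)`: the supremum of the lengths of words leading to `q`. -/
noncomputable def inLevel (M : PDFA α σ) (q : σ) : ℕ∞ :=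
  ⨆ w ∈ M.leftLang q, (w.length : ℕ∞)

/-- A DFA is minimal if all states are reachable and have pairwise
distinct right-languages. -/
def IsMinimal (M : PDFA α σ) : Prop :=
  (∀ q : σ, ∃ w : List α, M.eval w = some q) ∧
  ∀ q p : σ, M.rightLang q = M.rightLang p → q = p

end PDFA

/-- The distance between a state of `M` and a state of `N`. -/
noncomputable def stateDist {α σ τ : Type} (M : PDFA α σ) (N : PDFA α τ)
    (q : σ) (p : τ) : ℕ∞ :=
  langDist (M.rightLang q) (N.rightLang p)

/-- Two states `q` of `M` and `p` of `N` are `k`-similar if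
`d(q, p) + min(k, in-level_M(q), in-level_N(p)) ≤ k`. -/
def kSimSt {α σ τ : Type} (M : PDFA α σ) (N : PDFA α τ) (k : ℕ) (q : σ) (p : τ) : Prop :=
  stateDist M N q p + min (k : ℕ∞) (min (M.inLevel q) (N.inLevel p)) ≤ (k : ℕ∞)

/-- Two DFAs are `k`-similar if their languages differ only on words of length `< k`. -/
def kSimDFA {α σ τ : Type} (M : PDFA α σ) (N : PDFA α τ) (k : ℕ) : Prop :=
  ∀ w ∈ symmDiff M.accepts N.accepts, w.length < k

/-- Merging state `q` into state `p`: every transition ending in `q` is redirected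
to end in `p`, the start state becomes `p` if it was `q`, and `q` is deleted
(removed from the accepting states; it becomes unreachable). -/
def PDFA.merge {α σ : Type} [DecidableEq σ] (M : PDFA α σ) (q p : σ) : PDFA α σ where
  step r a := (M.step r a).map fun x => if x = q then p else x
  start := if M.start = q then p else M.start
  accept := M.accept \ {q}

/-- `MergeSeq M k N S` holds if the DFA `N` with surviving state set `S` is obtained
from `M` by a (possibly empty) sequence of merge steps, each merging a surviving
state `q` into a distinct surviving state `p` such that `q ∼_k p` as states of the
original DFA `M` and `in-level_M(q) ≤ in-level_M(p)`. -/
inductive MergeSeq {α σ : Type} [DecidableEq σ] (M : PDFA α σ) (k : ℕ) :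
    PDFA α σ → Set σ → Prop where
  | refl : MergeSeq M k M Set.univ
  | step {N : PDFA α σ} {S : Set σ} {q p : σ} :
      MergeSeq M k N S → q ∈ S → p ∈ S → q ≠ p →
      kSimSt M M k q p → M.inLevel q ≤ M.inLevel p →
      MergeSeq M k (N.merge q p) (S \ {q})


section Aux
variable {α σ : Type}

private lemma pdfa_foldl_none (M : PDFA α σ) (w : List α) :
    w.foldl (fun o a => o.bind fun r => M.step r a) none = none := by
  induction w <;> simp_all

private lemma pdfa_evalFrom_cons (M : PDFA α σ) (q : σ) (a : α) (w : List α) :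
    M.evalFrom q (a :: w) = (M.step q a).bind fun r => M.evalFrom r w := by
  cases h : M.step q a <;> simp [PDFA.evalFrom, h, pdfa_foldl_none]

private lemma pdfa_evalFrom_append (M : PDFA α σ) (q : σ) (u v : List α) :
    M.evalFrom q (u ++ v) = (M.evalFrom q u).bind fun r => M.evalFrom r v := by
  cases h : M.evalFrom q u
  · simp only [PDFA.evalFrom, List.foldl_append] at *
    rw [h, pdfa_foldl_none]; simp
  · simp only [PDFA.evalFrom, List.foldl_append] at *
    rw [h]; rfl

private lemma pdfa_attain (L : Set (List α)) (hne : L.Nonempty)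
    (hfin : (⨆ w ∈ L, (w.length : ℕ∞)) ≠ ⊤) :
    ∃ u ∈ L, (u.length : ℕ∞) = ⨆ w ∈ L, (w.length : ℕ∞) := by
  set s := ⨆ w ∈ L, (w.length : ℕ∞) with hs
  lift s to ℕ using hfin with n hn
  by_contra h
  push_neg at h
  obtain ⟨u0, hu0⟩ := hne
  have hle : ∀ w ∈ L, w.length ≤ n := by
    intro w hw
    have : (w.length : ℕ∞) ≤ (n : ℕ∞) :=
      hn ▸ le_iSup₂ (f := fun w (_ : w ∈ L) => (w.length : ℕ∞)) w hw
    exact_mod_cast this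
  have hlt : ∀ w ∈ L, w.length < n := by
    intro w hw
    have h1 := hle w hw
    have h2 := h w hw
    have : w.length ≠ n := by intro hh; exact h2 (by rw [hh])
    omega
  have hn0 : 0 < n := by have := hlt u0 hu0; omega
  have : s ≤ ((n - 1 : ℕ) : ℕ∞) := by
    show (⨆ w ∈ L, (w.length : ℕ∞)) ≤ ((n - 1 : ℕ) : ℕ∞)
    refine iSup₂_le fun w hw => ?_
    exact_mod_cast Nat.le_sub_one_of_lt (hlt w hw)
  rw [← hn] at this
  have : n ≤ n - 1 := by exact_mod_cast this
  omega

/-- All transitions of a merged automaton land in the surviving set. -/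
private lemma mergeSeq_step_mem [DecidableEq σ] {M : PDFA α σ} {k : ℕ}
    {N : PDFA α σ} {S : Set σ} (hseq : MergeSeq M k N S) :
    ∀ r a s, N.step r a = some s → s ∈ S := by
  induction hseq with
  | refl => intro r a s _; trivial
  | @step N S q p _ hq hp hqp _ _ ih =>
    intro r a s hstep
    simp only [PDFA.merge, Option.map_eq_some_iff] at hstep
    obtain ⟨x, hx, hxs⟩ := hstep
    have hxS := ih r a x hx
    by_cases hxq : x = q
    · simp only [hxq, if_pos rfl] at hxs
      exact ⟨hxs ▸ hp, by simp [← hxs, Ne.symm hqp]⟩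
    · simp only [if_neg hxq] at hxs
      exact ⟨hxs ▸ hxS, by simp [← hxs, hxq]⟩

/-- One transition raises the in-level (in `M`) by at least one. -/
private lemma mergeSeq_step_inLevel [DecidableEq σ] {M : PDFA α σ}
    (hM : M.IsMinimal) {k : ℕ} {N : PDFA α σ} {S : Set σ}
    (hseq : MergeSeq M k N S) :
    ∀ r ∈ S, ∀ a s, N.step r a = some s → M.inLevel s < (k : ℕ∞) →
      M.inLevel r + 1 ≤ M.inLevel s := by
  induction hseq with
  | refl =>
    intro r _ a s hstep hsk
    have hne : (M.leftLang r).Nonempty := hM.1 r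
    have happ : ∀ u ∈ M.leftLang r, u ++ [a] ∈ M.leftLang s := by
      intro u hu
      have : M.eval (u ++ [a]) = some s := by
        simp only [PDFA.eval, pdfa_evalFrom_append]
        rw [show M.evalFrom M.start u = some r from hu]
        simp [pdfa_evalFrom_cons, hstep, PDFA.evalFrom]
      exact this
    have hmono : ∀ u ∈ M.leftLang r, (u.length : ℕ∞) + 1 ≤ M.inLevel s := by
      intro u hu
      have := le_iSup₂ (f := fun w (_ : w ∈ M.leftLang s) => (w.length : ℕ∞))
        (u ++ [a]) (happ u hu)
      simpa [List.length_append, PDFA.inLevel] using this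
    have hrle : M.inLevel r ≤ M.inLevel s := by
      refine iSup₂_le fun u hu => le_trans ?_ (hmono u hu)
      exact le_self_add
    have hfin : M.inLevel r ≠ ⊤ := by
      intro h
      rw [h] at hrle
      exact absurd (top_le_iff.mp hrle ▸ hsk) (by simp [top_le_iff.mp hrle] at hsk ⊢)
    obtain ⟨u, hu, hulen⟩ := pdfa_attain (M.leftLang r) hne hfin
    calc M.inLevel r + 1 = (u.length : ℕ∞) + 1 := by rw [PDFA.inLevel, hulen]
      _ ≤ M.inLevel s := hmono u hu
  | @step N S q p hprev hq hp hqp _ hql ih =>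
    intro r hr a s hstep hsk
    simp only [PDFA.merge, Option.map_eq_some_iff] at hstep
    obtain ⟨x, hx, hxs⟩ := hstep
    have hrS : r ∈ S := hr.1
    by_cases hxq : x = q
    · simp only [hxq, if_pos rfl] at hxs
      subst hxs
      have hqk : M.inLevel q < (k : ℕ∞) := lt_of_le_of_lt hql hsk
      have := ih r hrS a q (hxq ▸ hx) hqk
      exact le_trans this hql
    · simp only [if_neg hxq] at hxs
      subst hxs
      exact ih r hrS a x hx hsk

/-- Summing along a word. -/
private lemma mergeSeq_word_inLevel [DecidableEq σ] {M : PDFA α σ}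
    (hM : M.IsMinimal) {k : ℕ} {N : PDFA α σ} {S : Set σ}
    (hseq : MergeSeq M k N S) :
    ∀ w : List α, ∀ p' ∈ S, ∀ p, N.evalFrom p' w = some p →
      M.inLevel p < (k : ℕ∞) →
      M.inLevel p' + (w.length : ℕ∞) ≤ M.inLevel p := by
  intro w
  induction w with
  | nil =>
    intro p' _ p hev _
    simp only [PDFA.evalFrom, List.foldl_nil, Option.some.injEq] at hev
    subst hev
    simp only [List.length_nil, Nat.cast_zero, add_zero]
    exact le_refl _
  | cons a w ih =>
    intro p' hp' p hev hpk
    rw [pdfa_evalFrom_cons] at hev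
    cases hstep : N.step p' a with
    | none => rw [hstep] at hev; simp at hev
    | some r =>
      rw [hstep] at hev
      simp only [Option.bind_some] at hev
      have hrS : r ∈ S := mergeSeq_step_mem hseq p' a r hstep
      have hrec := ih r hrS p hev hpk
      have hrk : M.inLevel r < (k : ℕ∞) :=
        lt_of_le_of_lt (le_trans le_self_add hrec) hpk
      have hone := mergeSeq_step_inLevel hM hseq p' hp' a r hstep hrk
      calc M.inLevel p' + ((a :: w).length : ℕ∞)
          = M.inLevel p' + 1 + (w.length : ℕ∞) := by
            push_cast [List.length_cons]; ring
        _ ≤ M.inLevel r + (w.length : ℕ∞) := add_le_add hone le_rfl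
        _ ≤ M.inLevel p := hrec

end Aux

/-- During merging, words in the merged automaton only lead "upwards" in in-level:
if `N` (with surviving states `S`) is obtained from the minimal DFA `M` by merge
steps and `δ_N(p', w) = p` with `in-level_M(p) < k`, then
`|w| ≤ in-level_M(p) − in-level_M(p')`. -/
theorem leading_word_length_le {α σ : Type} [Fintype α] [Fintype σ] [DecidableEq σ]
    (M : PDFA α σ) (hM : M.IsMinimal) (k : ℕ)
    (N : PDFA α σ) (S : Set σ) (hseq : MergeSeq M k N S) :
    ∀ p' ∈ S, ∀ p ∈ S, ∀ w : List α, N.evalFrom p' w = some p →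
      M.inLevel p < (k : ℕ∞) →
      (w.length : ℕ∞) ≤ M.inLevel p - M.inLevel p' := by
  intro p' hp' p _ w hev hpk
  have hsum := mergeSeq_word_inLevel hM hseq w p' hp' p hev hpk
  have hfin : M.inLevel p' ≠ ⊤ := by
    intro h
    rw [h, top_add] at hsum
    exact absurd (top_le_iff.mp hsum) (by intro hh; rw [hh] at hpk; exact (not_top_lt) hpk)
  exact ENat.le_sub_of_add_le_left hfin hsum
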